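/- arXiv:1111.5214 — 2 statements merged into one kernel-verified Lean document; each statement's English description precedes it below -/
import Mathlib

section
/- Suppose there exists α > 0 such that x·f(k,x) ≥ 0 for all k ∈ Z[1,N] and |x| > α, and max_k p(k) < 0. Then J is anti-coercive on E (J(x) → −∞ as ‖x‖ → ∞), and the boundary value problem has at least one solution. -/
open Finset

/-- forward difference operator -/
def dd (x : ℤ → ℝ) : ℤ → ℝ := fun i => x (i + 1) - x i

/-- extension of `v : Fin N → ℝ` to a function on `ℤ` supported on `Z[1,N]`
(thus vanishing on `Z[1-n,0] ∪ Z[N+1,N+n]`); this realizes the space `E`. -/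
noncomputable def extendE (N : ℕ) (v : Fin N → ℝ) : ℤ → ℝ := fun i =>
  if h : 0 ≤ i - 1 ∧ (i - 1).toNat < N then v ⟨(i - 1).toNat, h.2⟩ else 0

/-- the norm of the space `E`: `‖x‖ = (∑_{k=1}^N x(k)²)^{1/2}` -/
noncomputable def normE (N : ℕ) (v : Fin N → ℝ) : ℝ :=
  Real.sqrt (∑ k ∈ Finset.Icc (1 : ℤ) (N : ℤ), (extendE N v k) ^ 2)

/-- `F(k,s) = ∫₀ˢ f(k,t) dt` -/
noncomputable def Ffun (f : ℤ → ℝ → ℝ) (k : ℤ) (s : ℝ) : ℝ := ∫ t in (0 : ℝ)..s, f k t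

/-- the action functional `J` -/
noncomputable def Jfun (n N : ℕ) (p : ℤ → ℝ) (F : ℤ → ℝ → ℝ) (v : Fin N → ℝ) : ℝ :=
  ∑ k ∈ Finset.Icc (1 - (n : ℤ)) (N : ℤ),
    ((1 / 2 : ℝ) * p k * (dd^[n] (extendE N v) k) ^ 2 - F k (extendE N v k))

/-- `v` solves the discrete BVP
`Δⁿ(p(k-n)Δⁿx(k-n)) + (-1)^{n+1} f(k,x(k)) = 0`, `k ∈ Z[1,N]`,
with the Dirichlet boundary conditions built into `extendE`. -/
def Solves (n N : ℕ) (p : ℤ → ℝ) (f : ℤ → ℝ → ℝ) (v : Fin N → ℝ) : Prop :=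
  ∀ k ∈ Finset.Icc (1 : ℤ) (N : ℤ),
    dd^[n] (fun j => p j * dd^[n] (extendE N v) j) (k - n)
      + (-1 : ℝ) ^ (n + 1) * f k (extendE N v k) = 0

/-- coercivity: `J(x) → +∞` as `‖x‖ → ∞` -/
def CoerciveE (N : ℕ) (J : (Fin N → ℝ) → ℝ) : Prop :=
  ∀ C : ℝ, ∃ R : ℝ, ∀ v : Fin N → ℝ, R ≤ normE N v → C ≤ J v

/-- anti-coercivity: `J(x) → −∞` as `‖x‖ → ∞` -/
def AntiCoerciveE (N : ℕ) (J : (Fin N → ℝ) → ℝ) : Prop :=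
  ∀ C : ℝ, ∃ R : ℝ, ∀ v : Fin N → ℝ, R ≤ normE N v → J v ≤ C

/-! ### auxiliary lemmas -/

lemma dd_succ (m : ℕ) (x : ℤ → ℝ) (k : ℤ) :
    dd^[m+1] x k = dd^[m] x (k+1) - dd^[m] x k := by
  rw [Function.iterate_succ_apply']; rfl

lemma dd_binom (m : ℕ) (x : ℤ → ℝ) (k : ℤ) :
    dd^[m] x k = ∑ i ∈ Finset.range (m+1),
      ((-1:ℝ)^(m-i) * (m.choose i)) * x (k + i) := by
  have h2 : dd = fwdDiff (1:ℤ) := rfl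
  rw [h2, fwdDiff_iter_eq_sum_shift]
  refine Finset.sum_congr rfl fun i _ => ?_
  push_cast [zsmul_eq_mul, smul_eq_mul]
  ring_nf

lemma dd_comb (m : ℕ) (x y : ℤ → ℝ) (c : ℝ) (k : ℤ) :
    dd^[m] (fun i => x i + c * y i) k = dd^[m] x k + c * dd^[m] y k := by
  have h1 : (fun i => x i + c * y i) = x + c • y := rfl
  have h2 : dd = fwdDiff (1:ℤ) := rfl
  rw [h1, h2, fwdDiff_iter_add, fwdDiff_iter_const_smul]
  simp

lemma dd_zero_of_ge (m : ℕ) (x : ℤ → ℝ) (b : ℤ) (hx : ∀ j, b ≤ j → x j = 0) :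
    ∀ k, b ≤ k → dd^[m] x k = 0 := by
  induction m with
  | zero => simpa using hx
  | succ m ih =>
    intro k hk
    rw [dd_succ, ih k hk, ih (k+1) (by omega), sub_zero]

lemma extendE_le (N : ℕ) (v : Fin N → ℝ) (k : ℤ) (hk : k ≤ 0) : extendE N v k = 0 := by
  rw [extendE, dif_neg]; omega

lemma extendE_ge (N : ℕ) (v : Fin N → ℝ) (k : ℤ) (hk : (N:ℤ) + 1 ≤ k) : extendE N v k = 0 := by
  rw [extendE, dif_neg]; omega

lemma extendE_coe (N : ℕ) (v : Fin N → ℝ) (j : Fin N) : extendE N v ((j:ℤ) + 1) = v j := by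
  rw [extendE, dif_pos]
  · congr 1; ext; simp
  · constructor <;> simp [j.2]

/-- downward telescoping -/
lemma tele (g : ℤ → ℝ) (b M : ℤ) (h0 : ∀ j, M < j → g j = 0)
    (hd : ∀ k, b ≤ k → k ≤ M → g (k+1) = g k) : ∀ k, b ≤ k → g k = 0 := by
  suffices H : ∀ d : ℕ, ∀ k, b ≤ k → M + 1 - k ≤ (d:ℤ) → g k = 0 by
    intro k hk
    exact H (M + 1 - k).toNat k hk (Int.self_le_toNat _)
  intro d
  induction d with
  | zero => intro k hk hd'; exact h0 k (by omega)
  | succ d ih =>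
    intro k hk hdk
    rcases le_or_gt k M with h | h
    · rw [← hd k hk h]; exact ih (k+1) (by omega) (by omega)
    · exact h0 k h

lemma posdef (n N : ℕ) (v : Fin N → ℝ)
    (h : ∀ k ∈ Finset.Icc (1 - (n:ℤ)) (N:ℤ), dd^[n] (extendE N v) k = 0) :
    ∀ j, v j = 0 := by
  set x := extendE N v with hx
  have hxge : ∀ j, (N:ℤ) + 1 ≤ j → x j = 0 := fun j hj => extendE_ge N v j hj
  have key : ∀ m, (∀ k, 1 - (n:ℤ) ≤ k → dd^[m+1] x k = 0) →
      (∀ k, 1 - (n:ℤ) ≤ k → dd^[m] x k = 0) := by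
    intro m hm
    apply tele (dd^[m] x) (1 - (n:ℤ)) (N:ℤ)
    · intro j hj; exact dd_zero_of_ge m x ((N:ℤ)+1) hxge j (by omega)
    · intro k hk hkN
      have := hm k hk
      rw [dd_succ] at this
      linarith
  have hn : ∀ k, 1 - (n:ℤ) ≤ k → dd^[n] x k = 0 := by
    intro k hk
    rcases le_or_gt k (N:ℤ) with h' | h'
    · exact h k (Finset.mem_Icc.2 ⟨hk, h'⟩)
    · exact dd_zero_of_ge n x ((N:ℤ)+1) hxge k (by omega)
  have H : ∀ d : ℕ, ∀ k, 1 - (n:ℤ) ≤ k → dd^[n-d] x k = 0 := by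
    intro d
    induction d with
    | zero => simpa using hn
    | succ d ih =>
      rcases le_or_gt (d+1) n with hle | hlt
      · have h2 : n - d = (n - (d+1)) + 1 := by omega
        exact key _ (by rw [← h2]; exact ih)
      · have h2 : n - (d+1) = n - d := by omega
        rw [h2]; exact ih
  intro j
  have hj := H n ((j:ℤ) + 1) (by omega)
  simp only [Nat.sub_self, Function.iterate_zero, id_eq] at hj
  rw [hx] at hj
  rwa [extendE_coe] at hj

lemma cont_extendE (N : ℕ) (k : ℤ) : Continuous fun v : Fin N → ℝ => extendE N v k := by
  by_cases h : 0 ≤ k - 1 ∧ (k - 1).toNat < N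
  · have he : (fun v : Fin N → ℝ => extendE N v k) = fun v => v ⟨(k-1).toNat, h.2⟩ := by
      funext v; rw [extendE, dif_pos h]
    rw [he]; exact continuous_apply _
  · have he : (fun v : Fin N → ℝ => extendE N v k) = fun _ => 0 := by
      funext v; rw [extendE, dif_neg h]
    rw [he]; exact continuous_const

lemma cont_dd (N : ℕ) (m : ℕ) (k : ℤ) :
    Continuous fun v : Fin N → ℝ => dd^[m] (extendE N v) k := by
  induction m generalizing k with
  | zero => simpa using cont_extendE N k
  | succ m ih =>
    simp only [dd_succ]
    exact (ih (k+1)).sub (ih k)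

lemma extendE_smul (N : ℕ) (c : ℝ) (v : Fin N → ℝ) :
    extendE N (c • v) = fun i => c * extendE N v i := by
  funext i
  unfold extendE
  by_cases h : 0 ≤ i - 1 ∧ (i - 1).toNat < N
  · simp [dif_pos h]
  · simp [dif_neg h]

lemma dd_smul (m : ℕ) (c : ℝ) (x : ℤ → ℝ) (k : ℤ) :
    dd^[m] (fun i => c * x i) k = c * dd^[m] x k := by
  have h0 : dd^[m] (fun _ : ℤ => (0:ℝ)) k = 0 := by
    induction m generalizing k with
    | zero => simp
    | succ m ih => rw [dd_succ, ih, ih, sub_zero]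
  have := dd_comb m (fun _ => 0) x c k
  simpa [h0] using this

lemma Icc_eq_map (N : ℕ) : Finset.Icc (1:ℤ) (N:ℤ) =
    (Finset.range N).map ⟨fun i : ℕ => (i:ℤ)+1, fun a b hab => by simpa using hab⟩ := by
  ext k
  simp only [Finset.mem_Icc, Finset.mem_map, Finset.mem_range, Function.Embedding.coeFn_mk]
  constructor
  · rintro ⟨h1, h2⟩
    exact ⟨(k-1).toNat, by omega, show ((k-1).toNat:ℤ)+1 = k by omega⟩
  · rintro ⟨a, ha, rfl⟩
    show 1 ≤ (a:ℤ)+1 ∧ (a:ℤ)+1 ≤ N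
    omega

lemma sum_Icc_eq_sum_fin (N : ℕ) (g : ℤ → ℝ) :
    ∑ k ∈ Finset.Icc (1:ℤ) (N:ℤ), g k = ∑ j : Fin N, g ((j:ℤ)+1) := by
  rw [Icc_eq_map, Finset.sum_map, ← Finset.sum_range (fun i => g ((i:ℤ)+1))]
  rfl

lemma sum_sq_extend (N : ℕ) (v : Fin N → ℝ) :
    ∑ k ∈ Finset.Icc (1:ℤ) (N:ℤ), (extendE N v k)^2 = ∑ j, (v j)^2 := by
  rw [sum_Icc_eq_sum_fin]
  exact Finset.sum_congr rfl fun j _ => by rw [extendE_coe]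

noncomputable def Qf (n N : ℕ) (v : Fin N → ℝ) : ℝ :=
  ∑ k ∈ Finset.Icc (1 - (n:ℤ)) (N:ℤ), (dd^[n] (extendE N v) k)^2

lemma Qf_nonneg (n N : ℕ) (v : Fin N → ℝ) : 0 ≤ Qf n N v :=
  Finset.sum_nonneg fun _ _ => sq_nonneg _

lemma Qf_smul (n N : ℕ) (c : ℝ) (v : Fin N → ℝ) : Qf n N (c • v) = c^2 * Qf n N v := by
  unfold Qf
  rw [Finset.mul_sum]
  refine Finset.sum_congr rfl fun k _ => ?_
  rw [extendE_smul, dd_smul]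
  ring

lemma exists_lambda (n N : ℕ) (hN : 1 ≤ N) : ∃ lam : ℝ, 0 < lam ∧
    ∀ v : Fin N → ℝ, lam * ∑ j, (v j)^2 ≤ Qf n N v := by
  set S : Set (Fin N → ℝ) := {v | ∑ j, (v j)^2 = 1} with hS
  have hQcont : Continuous (Qf n N) :=
    continuous_finset_sum _ fun k _ => (cont_dd N n k).pow 2
  have hScompact : IsCompact S := by
    apply Metric.isCompact_of_isClosed_isBounded
    · exact isClosed_eq (continuous_finset_sum _ fun j _ => (continuous_apply j).pow 2)
        continuous_const
    · apply Bornology.IsBounded.subset (Metric.isBounded_closedBall (x := (0 : Fin N → ℝ)) (r := 1))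
      intro v hv
      simp only [Metric.mem_closedBall, dist_zero_right]
      apply pi_norm_le_iff_of_nonneg zero_le_one |>.2
      intro j
      have h1 : (v j)^2 ≤ 1 := by
        rw [← hv]
        exact Finset.single_le_sum (fun i _ => sq_nonneg (v i)) (Finset.mem_univ j)
      have := abs_nonneg (v j)
      have := sq_abs (v j)
      simp only [Real.norm_eq_abs]
      nlinarith
  have hSne : S.Nonempty := by
    refine ⟨fun j => if j = ⟨0, hN⟩ then 1 else 0, ?_⟩
    have h1 : ∀ j : Fin N, ((if j = (⟨0, hN⟩ : Fin N) then (1:ℝ) else 0))^2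
        = if j = ⟨0, hN⟩ then 1 else 0 := by
      intro j; by_cases h : j = ⟨0, hN⟩ <;> simp [h]
    simp only [hS, Set.mem_setOf_eq, h1, Finset.sum_ite_eq' Finset.univ,
      Finset.mem_univ, if_true]
  obtain ⟨u, huS, humin⟩ := hScompact.exists_isMinOn hSne hQcont.continuousOn
  refine ⟨Qf n N u, ?_, ?_⟩
  · rcases lt_or_eq_of_le (Qf_nonneg n N u) with h | h
    · exact h
    · exfalso
      have hz : ∀ k ∈ Finset.Icc (1 - (n:ℤ)) (N:ℤ), dd^[n] (extendE N u) k = 0 := by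
        intro k hk
        have := (Finset.sum_eq_zero_iff_of_nonneg (fun k _ => sq_nonneg
          (dd^[n] (extendE N u) k))).1 h.symm k hk
        exact pow_eq_zero_iff (two_ne_zero) |>.1 this
      have hu0 := posdef n N u hz
      have hsum0 : ∑ j, (u j)^2 = 0 := Finset.sum_eq_zero fun j _ => by rw [hu0 j]; ring
      rw [huS] at hsum0
      norm_num at hsum0
  · intro v
    set t2 := ∑ j, (v j)^2 with ht2
    have ht2nn : 0 ≤ t2 := Finset.sum_nonneg fun j _ => sq_nonneg _
    rcases eq_or_lt_of_le ht2nn with h0 | hpos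
    · rw [← h0, mul_zero]; exact Qf_nonneg n N v
    · set t := Real.sqrt t2 with ht
      have htpos : 0 < t := Real.sqrt_pos.2 hpos
      have htsq : t^2 = t2 := Real.sq_sqrt ht2nn
      set u' := t⁻¹ • v with hu'
      have hvu : v = t • u' := by rw [hu', smul_inv_smul₀ (ne_of_gt htpos)]
      have hu'S : u' ∈ S := by
        simp only [hS, Set.mem_setOf_eq, hu', Pi.smul_apply, smul_eq_mul, mul_pow,
          ← Finset.mul_sum]
        rw [← ht2, ← htsq]
        field_simp
      have hmin := isMinOn_iff.1 humin u' hu'S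
      calc Qf n N u * t2 = t2 * Qf n N u := by ring
        _ ≤ t2 * Qf n N u' := mul_le_mul_of_nonneg_left hmin ht2nn
        _ = t^2 * Qf n N u' := by rw [htsq]
        _ = Qf n N (t • u') := (Qf_smul n N t u').symm
        _ = Qf n N v := by rw [← hvu]

lemma sbp (n : ℕ) (N : ℕ) (h : ℤ → ℝ) (a : ℤ) (ha : 1 ≤ a) (ha' : a ≤ (N:ℤ)) :
    ∑ k ∈ Finset.Icc (1-(n:ℤ)) (N:ℤ),
      h k * dd^[n] (fun i => if i = a then (1:ℝ) else 0) k
    = (-1:ℝ)^n * dd^[n] h (a - n) := by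
  have lhs : ∀ k, h k * dd^[n] (fun i => if i = a then (1:ℝ) else 0) k
      = ∑ i ∈ Finset.range (n+1),
        (if k = a - i then ((-1:ℝ)^(n-i) * (n.choose i)) * h k else 0) := by
    intro k
    rw [dd_binom, Finset.mul_sum]
    refine Finset.sum_congr rfl fun i _ => ?_
    by_cases hc : k = a - i
    · rw [if_pos (by omega : k + (i:ℤ) = a), if_pos hc, mul_one]; ring
    · rw [if_neg (by omega : ¬ (k + (i:ℤ) = a)), if_neg hc, mul_zero, mul_zero]
  simp only [lhs]
  rw [Finset.sum_comm]
  have inner : ∀ i ∈ Finset.range (n+1), (∑ k ∈ Finset.Icc (1-(n:ℤ)) (N:ℤ),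
      if k = a - i then ((-1:ℝ)^(n-i) * (n.choose i)) * h k else 0)
      = ((-1:ℝ)^(n-i) * (n.choose i)) * h (a - i) := by
    intro i hi
    rw [Finset.sum_ite_eq' (Finset.Icc (1-(n:ℤ)) (N:ℤ)) (a - (i:ℤ))
      (fun k => ((-1:ℝ)^(n-i) * (n.choose i)) * h k), if_pos]
    rw [Finset.mem_Icc]
    simp only [Finset.mem_range] at hi
    omega
  rw [Finset.sum_congr rfl inner, dd_binom, Finset.mul_sum]
  rw [← Finset.sum_range_reflect
    (fun i => ((-1:ℝ)^(n-i) * (n.choose i)) * h (a - i)) (n+1)]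
  refine Finset.sum_congr rfl fun j hj => ?_
  simp only [Finset.mem_range] at hj
  have hj' : j ≤ n := by omega
  have e0 : n + 1 - 1 - j = n - j := by omega
  rw [e0, Nat.sub_sub_self hj', Nat.choose_symm hj']
  have e2 : a - ((n - j : ℕ) : ℤ) = a - n + j := by omega
  rw [e2]
  have e3 : (-1:ℝ)^(n-j) * (-1:ℝ)^j = (-1:ℝ)^n := by
    rw [← pow_add, Nat.sub_add_cancel hj']
  have e4 : (-1:ℝ)^(n-j) * (-1:ℝ)^(n-j) = 1 := by
    rw [← pow_add, ← two_mul]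
    exact Even.neg_one_pow ⟨n-j, by ring⟩
  have e5 : (-1:ℝ)^n * (-1:ℝ)^(n-j) = (-1:ℝ)^j := by
    rw [← e3, mul_right_comm, e4, one_mul]
  linear_combination (-(n.choose j : ℝ) * h (a - ↑n + ↑j)) * e5

lemma Ffun_hasDerivAt (f : ℤ → ℝ → ℝ) (hf : ∀ k, Continuous (f k)) (k : ℤ) (s : ℝ) :
    HasDerivAt (Ffun f k) (f k s) s :=
  ((hf k).integral_hasStrictDerivAt 0 s).hasDerivAt

lemma Ffun_cont (f : ℤ → ℝ → ℝ) (hf : ∀ k, Continuous (f k)) (k : ℤ) :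
    Continuous (Ffun f k) :=
  continuous_iff_continuousAt.2 fun s => (Ffun_hasDerivAt f hf k s).differentiableAt.continuousAt

lemma Ffun_zero (f : ℤ → ℝ → ℝ) (k : ℤ) : Ffun f k 0 = 0 := by
  simp [Ffun]

lemma Fbound (f : ℤ → ℝ → ℝ) (hf : ∀ k, Continuous (f k)) (α : ℝ) (hα : 0 < α)
    (k : ℤ) (hs : ∀ u : ℝ, α < |u| → 0 ≤ u * f k u) :
    ∃ m : ℝ, ∀ s : ℝ, m ≤ Ffun f k s := by
  have hαα : -α ≤ α := by linarith
  obtain ⟨c, hc, hmin⟩ := isCompact_Icc.exists_isMinOn (Set.nonempty_Icc.2 hαα)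
    (Ffun_cont f hf k).continuousOn
  have hmin' := isMinOn_iff.1 hmin
  have fposs : ∀ u : ℝ, α < u → 0 ≤ f k u := by
    intro u hu
    have h1 := hs u (by rw [abs_of_pos (by linarith)]; exact hu)
    nlinarith
  have fpos : ∀ u : ℝ, α ≤ u → 0 ≤ f k u := by
    intro u hu
    rcases eq_or_lt_of_le hu with heq | hlt
    · rw [← heq]
      have ht : Filter.Tendsto (f k) (nhdsWithin α (Set.Ioi α)) (nhds (f k α)) :=
        ((hf k).tendsto α).mono_left nhdsWithin_le_nhds
      refine ge_of_tendsto ht ?_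
      filter_upwards [self_mem_nhdsWithin] with x hx
      exact fposs x hx
    · exact fposs u hlt
  have fnegs : ∀ u : ℝ, u < -α → f k u ≤ 0 := by
    intro u hu
    have h1 := hs u (by rw [abs_of_neg (by linarith)]; linarith)
    nlinarith
  have fneg : ∀ u : ℝ, u ≤ -α → f k u ≤ 0 := by
    intro u hu
    rcases eq_or_lt_of_le hu with heq | hlt
    · rw [heq]
      have ht : Filter.Tendsto (f k) (nhdsWithin (-α) (Set.Iio (-α))) (nhds (f k (-α))) :=
        ((hf k).tendsto (-α)).mono_left nhdsWithin_le_nhds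
      refine le_of_tendsto ht ?_
      filter_upwards [self_mem_nhdsWithin] with x hx
      exact fnegs x hx
    · exact fnegs u hlt
  refine ⟨Ffun f k c, fun s => ?_⟩
  rcases le_or_gt s α with hsα | hsα
  · rcases le_or_gt (-α) s with hsm | hsm
    · exact hmin' s ⟨hsm, hsα⟩
    · have hadj : Ffun f k s + ∫ t in s..(-α), f k t = Ffun f k (-α) := by
        exact _root_.intervalIntegral.integral_add_adjacent_intervals
          ((hf k).intervalIntegrable 0 s) ((hf k).intervalIntegrable s (-α))
      have hI : (∫ t in s..(-α), f k t) ≤ 0 := by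
        have hI' : 0 ≤ ∫ t in s..(-α), -(f k t) :=
          _root_.intervalIntegral.integral_nonneg (by linarith)
            (fun u hu => by simpa using fneg u hu.2)
        rw [intervalIntegral.integral_neg] at hI'
        linarith
      have := hmin' (-α) ⟨le_refl _, hαα⟩
      linarith
  · have hadj : Ffun f k α + ∫ t in α..s, f k t = Ffun f k s :=
      _root_.intervalIntegral.integral_add_adjacent_intervals
        ((hf k).intervalIntegrable 0 α) ((hf k).intervalIntegrable α s)
    have hI : 0 ≤ ∫ t in α..s, f k t :=
      _root_.intervalIntegral.integral_nonneg (by linarith) (fun u hu => fpos u hu.1)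
    have := hmin' α ⟨hαα, le_refl _⟩
    linarith

lemma extendE_update (N : ℕ) (v : Fin N → ℝ) (j : Fin N) (s : ℝ) (i : ℤ) :
    extendE N (Function.update v j s) i
      = extendE N v i + (s - v j) * (if i = (j:ℤ)+1 then 1 else 0) := by
  by_cases hi : i = (j:ℤ)+1
  · subst hi
    rw [if_pos rfl, extendE_coe, extendE_coe, Function.update_self]; ring
  · rw [if_neg hi, mul_zero, add_zero]
    unfold extendE
    by_cases h : 0 ≤ i - 1 ∧ (i - 1).toNat < N
    · rw [dif_pos h, dif_pos h, Function.update_of_ne]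
      intro hceq
      apply hi
      have hval := congrArg Fin.val hceq
      simp only [] at hval
      omega
    · rw [dif_neg h, dif_neg h]

theorem stmt11 (n N : ℕ) (hn : 1 ≤ n) (hN : 2 ≤ N) (p : ℤ → ℝ)
    (f : ℤ → ℝ → ℝ) (hf : ∀ k, Continuous (f k))
    (hp : ∀ k ∈ Finset.Icc (1 - (n : ℤ)) (N : ℤ), p k < 0)
    (α : ℝ) (hα : 0 < α)
    (hsign : ∀ k ∈ Finset.Icc (1 : ℤ) (N : ℤ), ∀ u : ℝ, α < |u| → 0 ≤ u * f k u) :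
    AntiCoerciveE N (Jfun n N p (Ffun f)) ∧ ∃ v : Fin N → ℝ, Solves n N p f v := by
  have hne : (Finset.Icc (1 - (n:ℤ)) (N:ℤ)).Nonempty :=
    ⟨1, Finset.mem_Icc.2 ⟨by omega, by omega⟩⟩
  set s₀ := Finset.Icc (1 - (n:ℤ)) (N:ℤ) with hs₀
  -- upper bound for p
  set pbar := s₀.sup' hne p with hpbar
  have hpbar_lt : pbar < 0 := (Finset.sup'_lt_iff hne).2 hp
  have hple : ∀ k ∈ s₀, p k ≤ pbar := fun k hk => Finset.le_sup' p hk
  -- eigenvalue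
  obtain ⟨lam, hlam, hQ⟩ := exists_lambda n N (by omega)
  -- lower bound for F
  have hmex : ∀ k : ℤ, ∃ mk : ℝ, k ∈ Finset.Icc (1:ℤ) (N:ℤ) → ∀ s, mk ≤ Ffun f k s := by
    intro k
    by_cases hk : k ∈ Finset.Icc (1:ℤ) (N:ℤ)
    · obtain ⟨mk, hmk⟩ := Fbound f hf α hα k (hsign k hk)
      exact ⟨mk, fun _ => hmk⟩
    · exact ⟨0, fun h => absurd h hk⟩
  choose m hm using hmex
  obtain ⟨K, hK⟩ : ∃ K : ℝ, K = ∑ k ∈ s₀, (if k ∈ Finset.Icc (1:ℤ) (N:ℤ)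
      then min (m k) 0 else 0) := ⟨_, rfl⟩
  -- key estimate
  have hest : ∀ v : Fin N → ℝ,
      Jfun n N p (Ffun f) v ≤ (pbar * lam / 2) * (∑ j, (v j)^2) - K := by
    intro v
    have h1 : Jfun n N p (Ffun f) v ≤
        (∑ k ∈ s₀, (1/2 : ℝ) * pbar * (dd^[n] (extendE N v) k)^2) - K := by
      rw [Jfun, hK, ← Finset.sum_sub_distrib]
      refine Finset.sum_le_sum fun k hk => ?_
      have hterm1 : (1/2 : ℝ) * p k * (dd^[n] (extendE N v) k)^2
          ≤ (1/2 : ℝ) * pbar * (dd^[n] (extendE N v) k)^2 := by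
        have := hple k hk
        nlinarith [sq_nonneg (dd^[n] (extendE N v) k)]
      have hterm2 : (if k ∈ Finset.Icc (1:ℤ) (N:ℤ) then min (m k) 0 else 0)
          ≤ Ffun f k (extendE N v k) := by
        by_cases hk2 : k ∈ Finset.Icc (1:ℤ) (N:ℤ)
        · rw [if_pos hk2]
          exact le_trans (min_le_left _ _) (hm k hk2 _)
        · rw [if_neg hk2]
          have hk0 : k ≤ 0 := by
            simp only [hs₀, Finset.mem_Icc] at hk
            simp only [Finset.mem_Icc] at hk2
            omega
          rw [extendE_le N v k hk0, Ffun_zero]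
      linarith
    have h2 : (∑ k ∈ s₀, (1/2 : ℝ) * pbar * (dd^[n] (extendE N v) k)^2)
        = (pbar / 2) * Qf n N v := by
      rw [Qf, Finset.mul_sum]
      exact Finset.sum_congr rfl fun k _ => by ring
    have h3 : (pbar / 2) * Qf n N v ≤ (pbar / 2) * (lam * ∑ j, (v j)^2) :=
      mul_le_mul_of_nonpos_left (hQ v) (by linarith)
    calc Jfun n N p (Ffun f) v
        ≤ (∑ k ∈ s₀, (1/2 : ℝ) * pbar * (dd^[n] (extendE N v) k)^2) - K := h1
      _ = (pbar / 2) * Qf n N v - K := by rw [h2]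
      _ ≤ (pbar / 2) * (lam * ∑ j, (v j)^2) - K := by linarith
      _ = (pbar * lam / 2) * (∑ j, (v j)^2) - K := by ring
  have hc : pbar * lam / 2 < 0 := by
    have : pbar * lam < 0 := mul_neg_of_neg_of_pos hpbar_lt hlam
    linarith
  set c := pbar * lam / 2 with hcdef
  -- anti-coercivity
  have hAC : AntiCoerciveE N (Jfun n N p (Ffun f)) := by
    intro C
    set M := max ((C + K) / c) 0 with hM
    refine ⟨Real.sqrt M + 1, fun v hv => ?_⟩
    have hT : ∑ j, (v j)^2 = (normE N v)^2 := by
      simp only [normE]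
      rw [Real.sq_sqrt (Finset.sum_nonneg fun k _ => sq_nonneg _), sum_sq_extend]
    have hMnn : 0 ≤ M := le_max_right _ _
    have hsqM : Real.sqrt M ^ 2 = M := Real.sq_sqrt hMnn
    have hsqnn : 0 ≤ Real.sqrt M := Real.sqrt_nonneg M
    have hnv : 0 ≤ normE N v := Real.sqrt_nonneg _
    have hTge : (C + K) / c ≤ ∑ j, (v j)^2 := by
      rw [hT]
      have h1 : (C + K) / c ≤ M := le_max_left _ _
      nlinarith
    have hfin : c * ((C + K) / c) = C + K := by
      rw [mul_comm, div_mul_cancel₀ _ (ne_of_lt hc)]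
    have := mul_le_mul_of_nonpos_left hTge (le_of_lt hc)
    have := hest v
    linarith
  refine ⟨hAC, ?_⟩
  -- existence of a maximizer
  set J := Jfun n N p (Ffun f) with hJ
  have hJcont : Continuous J := by
    apply continuous_finset_sum
    intro k _
    exact (continuous_const.mul ((cont_dd N n k).pow 2)).sub
      ((Ffun_cont f hf k).comp (cont_extendE N k))
  obtain ⟨R, hR⟩ := hAC (J 0 - 1)
  have h0mem : (0 : Fin N → ℝ) ∈ Metric.closedBall (0 : Fin N → ℝ) (max R 0) :=
    Metric.mem_closedBall_self (le_max_right _ _)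
  obtain ⟨v₀, hv₀K, hmax⟩ := (isCompact_closedBall (0 : Fin N → ℝ) (max R 0)).exists_isMaxOn
    ⟨0, h0mem⟩ hJcont.continuousOn
  have hmax' := isMaxOn_iff.1 hmax
  have hnormle : ∀ v : Fin N → ℝ, ‖v‖ ≤ normE N v := by
    intro v
    apply pi_norm_le_iff_of_nonneg (Real.sqrt_nonneg _) |>.2
    intro j
    rw [Real.norm_eq_abs, ← Real.sqrt_sq_eq_abs]
    apply Real.sqrt_le_sqrt
    rw [sum_sq_extend]
    exact Finset.single_le_sum (fun i _ => sq_nonneg (v i)) (Finset.mem_univ j)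
  have hglobal : ∀ v, J v ≤ J v₀ := by
    intro v
    by_cases hv : v ∈ Metric.closedBall (0 : Fin N → ℝ) (max R 0)
    · exact hmax' v hv
    · have h1 : max R 0 < ‖v‖ := by
        simp only [Metric.mem_closedBall, dist_zero_right, not_le] at hv
        exact hv
      have h2 : R ≤ normE N v := le_trans (le_trans (le_max_left _ _) h1.le) (hnormle v)
      have h3 := hR v h2
      have h4 := hmax' 0 h0mem
      linarith
  refine ⟨v₀, ?_⟩
  intro k hk
  have hk1 : 1 ≤ k := (Finset.mem_Icc.1 hk).1
  have hk2 : k ≤ (N:ℤ) := (Finset.mem_Icc.1 hk).2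
  set j : Fin N := ⟨(k-1).toNat, by omega⟩ with hjdef
  have hjk : ((j:ℤ)) + 1 = k := by simp only [hjdef]; omega
  set cc := v₀ j with hcc
  set δ : ℤ → ℝ := fun i => if i = k then (1:ℝ) else 0 with hδ
  have hupd : ∀ s : ℝ, extendE N (Function.update v₀ j s)
      = fun i => extendE N v₀ i + (s - cc) * δ i := by
    intro s
    funext i
    rw [extendE_update, hjk]
  have hxk : extendE N v₀ k = cc := by
    rw [← hjk, extendE_coe]
  -- derivative of each term
  have hQd : ∀ k' ∈ s₀, HasDerivAt
      (fun s : ℝ => (1/2 : ℝ) * p k' * (dd^[n] (extendE N v₀) k' + (s - cc) * dd^[n] δ k')^2)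
      (p k' * dd^[n] (extendE N v₀) k' * dd^[n] δ k') cc := by
    intro k' _
    have h1 : HasDerivAt (fun s : ℝ => dd^[n] (extendE N v₀) k' + (s - cc) * dd^[n] δ k')
        (dd^[n] δ k') cc := by
      simpa using (((hasDerivAt_id cc).sub_const cc).mul_const (dd^[n] δ k')).const_add
        (dd^[n] (extendE N v₀) k')
    have h2 := (h1.pow 2).const_mul ((1/2 : ℝ) * p k')
    refine h2.congr_deriv ?_
    simp
    ring
  have hFd : ∀ k' ∈ s₀, HasDerivAt
      (fun s : ℝ => Ffun f k' (extendE N v₀ k' + (s - cc) * δ k'))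
      (if k' = k then f k (extendE N v₀ k) else 0) cc := by
    intro k' _
    by_cases hkk : k' = k
    · subst hkk
      rw [if_pos rfl]
      have hδ1 : δ k' = 1 := if_pos rfl
      have hfun : (fun s : ℝ => Ffun f k' (extendE N v₀ k' + (s - cc) * δ k'))
          = Ffun f k' := by
        funext s
        rw [hδ1, hxk]
        have harg : cc + (s - cc) * 1 = s := by ring
        rw [harg]
      rw [hfun, ← hxk]
      exact Ffun_hasDerivAt f hf k' (extendE N v₀ k') |>.congr_deriv rfl
    · rw [if_neg hkk]
      have hδ0 : δ k' = 0 := if_neg hkk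
      have hfun : (fun s : ℝ => Ffun f k' (extendE N v₀ k' + (s - cc) * δ k'))
          = fun _ => Ffun f k' (extendE N v₀ k') := by
        funext s
        rw [hδ0, mul_zero, add_zero]
      rw [hfun]
      exact hasDerivAt_const _ _
  have hsum : HasDerivAt (fun s : ℝ => ∑ k' ∈ s₀,
      ((1/2 : ℝ) * p k' * (dd^[n] (extendE N v₀) k' + (s - cc) * dd^[n] δ k')^2
        - Ffun f k' (extendE N v₀ k' + (s - cc) * δ k')))
      (∑ k' ∈ s₀, (p k' * dd^[n] (extendE N v₀) k' * dd^[n] δ k'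
        - (if k' = k then f k (extendE N v₀ k) else 0))) cc :=
    HasDerivAt.fun_sum fun k' hk' => (hQd k' hk').sub (hFd k' hk')
  have heq : (fun s : ℝ => Jfun n N p (Ffun f) (Function.update v₀ j s))
      = fun s : ℝ => ∑ k' ∈ s₀,
      ((1/2 : ℝ) * p k' * (dd^[n] (extendE N v₀) k' + (s - cc) * dd^[n] δ k')^2
        - Ffun f k' (extendE N v₀ k' + (s - cc) * δ k')) := by
    funext s
    rw [Jfun]
    refine Finset.sum_congr rfl fun k' _ => ?_
    rw [hupd s, dd_comb]
  have hloc : IsLocalMax (fun s : ℝ => Jfun n N p (Ffun f) (Function.update v₀ j s)) cc := by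
    apply Filter.Eventually.of_forall
    intro s
    have h1 := hglobal (Function.update v₀ j s)
    have h2 : Function.update v₀ j cc = v₀ := Function.update_eq_self j v₀
    show Jfun n N p (Ffun f) (Function.update v₀ j s)
      ≤ Jfun n N p (Ffun f) (Function.update v₀ j cc)
    rw [h2]
    exact h1
  have hD0 : (∑ k' ∈ s₀, (p k' * dd^[n] (extendE N v₀) k' * dd^[n] δ k'
      - (if k' = k then f k (extendE N v₀ k) else 0))) = 0 :=
    hloc.hasDerivAt_eq_zero (heq ▸ hsum)
  rw [Finset.sum_sub_distrib, Finset.sum_ite_eq' s₀ k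
    (fun _ => f k (extendE N v₀ k)), if_pos (by rw [hs₀, Finset.mem_Icc]; omega)] at hD0
  have hsbp := sbp n N (fun i => p i * dd^[n] (extendE N v₀) i) k hk1 hk2
  rw [← hδ, ← hs₀] at hsbp
  have hkey : (-1:ℝ)^n * dd^[n] (fun i => p i * dd^[n] (extendE N v₀) i) (k - n)
      = f k (extendE N v₀ k) := by
    rw [← hsbp]
    linarith [hD0]
  have hsq : (-1:ℝ)^n * (-1:ℝ)^n = 1 := by
    rw [← pow_add, ← two_mul]
    exact Even.neg_one_pow ⟨n, by ring⟩
  have hpow : ((-1:ℝ))^(n+1) = -((-1:ℝ)^n) := by rw [pow_succ]; ring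
  rw [hpow, ← hkey]
  set T := dd^[n] (fun i => p i * dd^[n] (extendE N v₀) i) (k - n) with hT
  calc T + -((-1:ℝ)^n) * ((-1:ℝ)^n * T) = T - ((-1:ℝ)^n * (-1:ℝ)^n) * T := by ring
    _ = 0 := by rw [hsq]; ring
end

section
/- Suppose there exist M ≥ 0, α < 0, and q > 2 such that F(k,u) ≤ α|u|^q for all k ∈ Z[1,N] and |u| > M (p arbitrary). Then J is coercive on E and the boundary value problem has at least one solution. -/
open Finset

lemma extendE_eq_zero {N : ℕ} (v : Fin N → ℝ) {k : ℤ} (hk : k ∉ Finset.Icc (1:ℤ) (N:ℤ)) :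
    extendE N v k = 0 := by
  rw [extendE]
  rw [Finset.mem_Icc] at hk
  push_neg at hk
  rw [dif_neg]
  rintro ⟨h1, h2⟩
  rcases lt_or_ge k 1 with h | h
  · omega
  · have := hk h; omega

lemma extendE_apply {N : ℕ} (v : Fin N → ℝ) (i : Fin N) :
    extendE N v ((i : ℤ) + 1) = v i := by
  rw [extendE]
  have h1 : (0:ℤ) ≤ (i:ℤ) + 1 - 1 := by omega
  have h2 : ((i:ℤ) + 1 - 1).toNat = (i:ℕ) := by omega
  rw [dif_pos ⟨h1, by omega⟩]
  congr 1
  exact Fin.ext (by simp [h2])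

lemma extendE_add_smul {N : ℕ} (v w : Fin N → ℝ) (t : ℝ) (k : ℤ) :
    extendE N (v + t • w) k = extendE N v k + t * extendE N w k := by
  rw [extendE, extendE, extendE]
  split
  · simp
  · simp
lemma dd_iter_add_smul (x y : ℤ → ℝ) (t : ℝ) (n : ℕ) (k : ℤ) :
    dd^[n] (fun j => x j + t * y j) k = dd^[n] x k + t * dd^[n] y k := by
  induction n generalizing k with
  | zero => simp
  | succ n ih =>
    rw [Function.iterate_succ_apply', Function.iterate_succ_apply',
      Function.iterate_succ_apply']
    simp only [dd, ih]
    ring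

lemma dd_iter_bound {x : ℤ → ℝ} {c : ℝ} (hx : ∀ j, |x j| ≤ c) (n : ℕ) (k : ℤ) :
    |dd^[n] x k| ≤ 2 ^ n * c := by
  induction n generalizing k with
  | zero => simpa using hx k
  | succ n ih =>
    rw [Function.iterate_succ_apply']
    calc |dd (dd^[n] x) k| ≤ |dd^[n] x (k+1)| + |dd^[n] x k| := abs_sub _ _
    _ ≤ 2 ^ n * c + 2 ^ n * c := add_le_add (ih _) (ih _)
    _ = 2 ^ (n+1) * c := by ring

lemma dd_iter_eq_zero {x : ℤ → ℝ} {n : ℕ} {k : ℤ}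
    (hx : ∀ j, k ≤ j → j ≤ k + n → x j = 0) : dd^[n] x k = 0 := by
  induction n generalizing k with
  | zero => exact hx k le_rfl (by simp)
  | succ n ih =>
    rw [Function.iterate_succ_apply', dd]
    rw [ih (fun j h1 h2 => hx j (by omega) (by push_cast; push_cast at h2; omega)),
      ih (fun j h1 h2 => hx j (by omega) (by push_cast; push_cast at h2; omega))]
    ring
lemma sbp_s12 (n : ℕ) (a b : ℤ) (hab : a ≤ b) (g h : ℤ → ℝ)
    (h0 : ∀ k, k < a → h k = 0) (h1 : ∀ k, b < k → h k = 0) :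
    ∑ k ∈ Finset.Icc (a - n) b, g k * dd^[n] h k
      = (-1:ℝ)^n * ∑ k ∈ Finset.Icc a b, dd^[n] g (k - n) * h k := by
  induction n generalizing a g h with
  | zero => simp
  | succ n ih =>
    have hdd0 : ∀ k, k < a - 1 → dd h k = 0 := fun k hk => by
      rw [dd, h0 _ (by omega), h0 _ (by omega)]; ring
    have hdd1 : ∀ k, b < k → dd h k = 0 := fun k hk => by
      rw [dd, h1 _ (by omega), h1 _ (by omega)]; ring
    have key := ih (a - 1) (by omega) g (dd h) hdd0 hdd1
    have e1 : ∑ k ∈ Finset.Icc (a - (n+1:ℕ)) b, g k * dd^[n+1] h k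
        = ∑ k ∈ Finset.Icc (a - 1 - (n:ℕ)) b, g k * dd^[n] (dd h) k := by
      apply Finset.sum_congr
      · congr 1; push_cast; ring
      · intro k _
        rw [Function.iterate_succ_apply]
    rw [e1, key]
    set G : ℤ → ℝ := fun k => dd^[n] g (k - n) with hG
    have e2 : ∑ k ∈ Finset.Icc (a-1) b, G k * dd h k
        = (∑ k ∈ Finset.Icc (a-1) b, G k * h (k+1)) - ∑ k ∈ Finset.Icc (a-1) b, G k * h k := by
      rw [← Finset.sum_sub_distrib]
      apply Finset.sum_congr rfl
      intro k _
      rw [dd]; ring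
    have e3 : ∑ k ∈ Finset.Icc (a-1) b, G k * h (k+1)
        = ∑ k ∈ Finset.Icc a (b+1), G (k-1) * h k := by
      apply Finset.sum_nbij' (fun k => k + 1) (fun k => k - 1)
      · intro k hk; simp only [Finset.mem_Icc] at *; omega
      · intro k hk; simp only [Finset.mem_Icc] at *; omega
      · intro k _; ring
      · intro k _; ring
      · intro k _; norm_num
    have e4 : ∑ k ∈ Finset.Icc a (b+1), G (k-1) * h k
        = ∑ k ∈ Finset.Icc a b, G (k-1) * h k := by
      have : Finset.Icc a (b+1) = insert (b+1) (Finset.Icc a b) := by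
        ext k; simp only [Finset.mem_insert, Finset.mem_Icc]; omega
      rw [this, Finset.sum_insert (by simp)]
      rw [h1 _ (by omega)]
      ring
    have e5 : ∑ k ∈ Finset.Icc (a-1) b, G k * h k
        = ∑ k ∈ Finset.Icc a b, G k * h k := by
      have : Finset.Icc (a-1) b = insert (a-1) (Finset.Icc a b) := by
        ext k; simp only [Finset.mem_insert, Finset.mem_Icc]; omega
      rw [this, Finset.sum_insert (by simp)]
      rw [h0 _ (by omega)]
      ring
    rw [e2, e3, e4, e5, ← Finset.sum_sub_distrib]
    have e6 : ∑ k ∈ Finset.Icc a b, (G (k-1) * h k - G k * h k)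
        = - ∑ k ∈ Finset.Icc a b, dd^[n+1] g (k - (n+1:ℕ)) * h k := by
      rw [← Finset.sum_neg_distrib]
      apply Finset.sum_congr rfl
      intro k _
      have hdd : dd^[n+1] g (k - (n+1:ℕ)) = G k - G (k-1) := by
        rw [Function.iterate_succ_apply', dd, hG]
        congr 2 <;> push_cast <;> ring
      rw [hdd]
      ring
    rw [e6, pow_succ]
    ring
lemma extendE_single {N : ℕ} (m : Fin N) (k : ℤ) :
    extendE N (Pi.single m 1) k = if k = (m:ℤ) + 1 then 1 else 0 := by
  by_cases hk : k = (m:ℤ) + 1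
  · subst hk
    rw [extendE_apply, if_pos rfl, Pi.single_eq_same]
  · rw [if_neg hk]
    rw [extendE]
    split
    · rename_i h
      rw [Pi.single_eq_of_ne]
      intro he
      apply hk
      have := congrArg (Fin.val) he
      simp at this
      omega
    · rfl

lemma hasDerivAt_Ffun {f : ℤ → ℝ → ℝ} (hf : ∀ k, Continuous (f k)) (k : ℤ) (s : ℝ) :
    HasDerivAt (Ffun f k) (f k s) s := by
  exact (intervalIntegral.integral_hasStrictDerivAt_right
    ((hf k).intervalIntegrable _ _)
    ((hf k).stronglyMeasurableAtFilter _ _)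
    (hf k).continuousAt).hasDerivAt

lemma continuous_extendE {N : ℕ} (k : ℤ) : Continuous fun v : Fin N → ℝ => extendE N v k := by
  simp only [extendE]
  by_cases h : 0 ≤ k - 1 ∧ (k-1).toNat < N
  · simp only [dif_pos h]; exact continuous_apply _
  · simp only [dif_neg h]; exact continuous_const

lemma continuous_dd_iter {N : ℕ} (n : ℕ) (k : ℤ) :
    Continuous fun v : Fin N → ℝ => dd^[n] (extendE N v) k := by
  induction n generalizing k with
  | zero => simpa using continuous_extendE k
  | succ n ih =>
    simp only [Function.iterate_succ_apply', dd]
    exact (ih (k+1)).sub (ih k)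

lemma continuous_Jfun (n N : ℕ) (p : ℤ → ℝ) {f : ℤ → ℝ → ℝ} (hf : ∀ k, Continuous (f k)) :
    Continuous (Jfun n N p (Ffun f)) := by
  unfold Jfun
  apply continuous_finset_sum
  intro k _
  apply Continuous.sub
  · exact (continuous_const.mul ((continuous_dd_iter n k).pow 2))
  · have hF : Continuous (Ffun f k) :=
      Differentiable.continuous (fun s => (hasDerivAt_Ffun hf k s).differentiableAt)
    exact hF.comp (continuous_extendE k)
set_option maxHeartbeats 1000000 in
lemma coerciveJ (n N : ℕ) (hn : 1 ≤ n) (hN : 2 ≤ N) (p : ℤ → ℝ)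
    (f : ℤ → ℝ → ℝ) (hf : ∀ k, Continuous (f k))
    (M α q : ℝ) (hM : 0 ≤ M) (hα : α < 0) (hq : 2 < q)
    (hFle : ∀ k ∈ Finset.Icc (1 : ℤ) (N : ℤ), ∀ u : ℝ, M < |u| →
      Ffun f k u ≤ α * |u| ^ q) :
    CoerciveE N (Jfun n N p (Ffun f)) := by
  have hq0 : (0:ℝ) < q := by linarith
  -- bound for Ffun on [-M, M]
  have hBk : ∀ k : ℤ, ∃ C : ℝ, 0 ≤ C ∧ ∀ u : ℝ, |u| ≤ M → |Ffun f k u| ≤ C := by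
    intro k
    have hFc : Continuous (Ffun f k) :=
      Differentiable.continuous (fun s => (hasDerivAt_Ffun hf k s).differentiableAt)
    obtain ⟨C, hC⟩ := (isCompact_Icc (a := -M) (b := M)).exists_bound_of_continuousOn
      hFc.continuousOn
    refine ⟨max C 0, le_max_right _ _, fun u hu => ?_⟩
    have := hC u (by rw [Set.mem_Icc]; constructor <;> cases abs_le.mp hu <;> linarith)
    calc |Ffun f k u| = ‖Ffun f k u‖ := rfl
    _ ≤ C := this
    _ ≤ max C 0 := le_max_left _ _
  choose Cf hCf0 hCf using hBk
  set S := Finset.Icc (1 - (n:ℤ)) (N:ℤ) with hS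
  set B := ∑ k ∈ Finset.Icc (1:ℤ) (N:ℤ), Cf k with hB
  have hB0 : 0 ≤ B := Finset.sum_nonneg fun k _ => hCf0 k
  set D := B + (-α) * M ^ q with hD
  have hD0 : 0 ≤ D := by
    have : (0:ℝ) ≤ (-α) * M ^ q :=
      mul_nonneg (by linarith) (Real.rpow_nonneg hM q)
    linarith
  set P := ∑ k ∈ S, (1/2) * |p k| * 4 ^ n with hP
  have hP0 : 0 ≤ P := Finset.sum_nonneg fun k _ => by positivity
  set K := (S.card : ℝ) * D with hK
  have hsN : (0:ℝ) < Real.sqrt N := Real.sqrt_pos.mpr (by positivity)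
  set c := (-α) / (Real.sqrt N) ^ q with hc
  have hc0 : 0 < c := div_pos (by linarith) (Real.rpow_pos_of_pos hsN q)
  -- main lower bound : J v ≥ c * r^q - P * r^2 - K  where r = normE N v
  have main : ∀ v : Fin N → ℝ,
      c * (normE N v) ^ q - P * (normE N v) ^ 2 - K ≤ Jfun n N p (Ffun f) v := by
    intro v
    set x := extendE N v with hx
    set r := normE N v with hr
    have hr0 : 0 ≤ r := Real.sqrt_nonneg _
    have hr2 : r ^ 2 = ∑ k ∈ Finset.Icc (1:ℤ) (N:ℤ), x k ^ 2 := by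
      rw [hr, normE, sq, Real.mul_self_sqrt (Finset.sum_nonneg fun k _ => sq_nonneg _)]
    -- pointwise bound |x j| ≤ r
    have hxr : ∀ j : ℤ, |x j| ≤ r := by
      intro j
      by_cases hj : j ∈ Finset.Icc (1:ℤ) (N:ℤ)
      · have h1 : x j ^ 2 ≤ r ^ 2 := by
          rw [hr2]
          exact Finset.single_le_sum (fun k _ => sq_nonneg (x k)) hj
        calc |x j| = Real.sqrt (x j ^ 2) := (Real.sqrt_sq_eq_abs _).symm
        _ ≤ Real.sqrt (r ^ 2) := Real.sqrt_le_sqrt h1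
        _ = r := by rw [Real.sqrt_sq hr0]
      · rw [hx, extendE_eq_zero v hj]; simpa using hr0
    -- quadratic term bound
    have hquad : ∀ k ∈ S, -((1/2) * |p k| * 4 ^ n * r ^ 2)
        ≤ (1/2) * p k * (dd^[n] x k) ^ 2 := by
      intro k _
      have h1 : |dd^[n] x k| ≤ 2 ^ n * r := dd_iter_bound hxr n k
      have h2 : (dd^[n] x k) ^ 2 ≤ 4 ^ n * r ^ 2 := by
        have := sq_le_sq' (neg_le_of_abs_le h1) (le_of_abs_le h1)
        calc (dd^[n] x k) ^ 2 ≤ (2 ^ n * r) ^ 2 := this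
        _ = 4 ^ n * r ^ 2 := by
          rw [mul_pow, ← pow_mul, mul_comm n 2, pow_mul]
          norm_num
      have h3 : -|p k| ≤ p k := neg_abs_le _
      nlinarith [abs_nonneg (p k), sq_nonneg (dd^[n] x k)]
    -- potential term bound
    have hpot : ∀ k ∈ S, (-α) * |x k| ^ q - D ≤ -(Ffun f k (x k)) := by
      intro k hk
      by_cases hk1 : k ∈ Finset.Icc (1:ℤ) (N:ℤ)
      · by_cases hxM : M < |x k|
        · have := hFle k hk1 (x k) hxM
          nlinarith
        · push_neg at hxM
          have h1 : |Ffun f k (x k)| ≤ Cf k := hCf k (x k) hxM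
          have h2 : Cf k ≤ B := Finset.single_le_sum (fun j _ => hCf0 j) hk1
          have h3 : |x k| ^ q ≤ M ^ q :=
            Real.rpow_le_rpow (abs_nonneg _) hxM (le_of_lt hq0)
          have h4 : -(Ffun f k (x k)) ≥ -B := by
            have := le_abs_self (Ffun f k (x k))
            linarith
          have h5 : (-α) * |x k| ^ q ≤ (-α) * M ^ q :=
            mul_le_mul_of_nonneg_left h3 (by linarith)
          rw [hD]
          linarith
      · have hxk : x k = 0 := extendE_eq_zero v hk1
        rw [hxk]
        have : Ffun f k 0 = 0 := intervalIntegral.integral_same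
        rw [this, abs_zero, Real.zero_rpow (ne_of_gt hq0)]
        simpa using hD0
    -- lower bound for sum of |x k|^q
    have hmax : ∃ k₀ ∈ Finset.Icc (1:ℤ) (N:ℤ), r ^ 2 / N ≤ x k₀ ^ 2 := by
      apply Finset.exists_le_of_sum_le
      · exact ⟨1, by rw [Finset.mem_Icc]; omega⟩
      · rw [← hr2, Finset.sum_const, Int.card_Icc]
        have : ((N:ℤ) + 1 - 1).toNat = N := by omega
        rw [this, nsmul_eq_mul]
        rw [mul_div_cancel₀]
        positivity
    obtain ⟨k₀, hk₀S, hk₀⟩ := hmax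
    have hk₀abs : r / Real.sqrt N ≤ |x k₀| := by
      calc r / Real.sqrt N = Real.sqrt (r ^ 2) / Real.sqrt N := by rw [Real.sqrt_sq hr0]
      _ = Real.sqrt (r ^ 2 / N) := (Real.sqrt_div (sq_nonneg r) N).symm
      _ ≤ Real.sqrt (x k₀ ^ 2) := Real.sqrt_le_sqrt hk₀
      _ = |x k₀| := Real.sqrt_sq_eq_abs _
    have hsumq : c * r ^ q ≤ (-α) * ∑ k ∈ S, |x k| ^ q := by
      have h1 : |x k₀| ^ q ≤ ∑ k ∈ S, |x k| ^ q := by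
        apply Finset.single_le_sum (fun k _ => Real.rpow_nonneg (abs_nonneg _) q)
        rw [hS, Finset.mem_Icc]
        rw [Finset.mem_Icc] at hk₀S
        omega
      have h2 : (r / Real.sqrt N) ^ q ≤ |x k₀| ^ q :=
        Real.rpow_le_rpow (by positivity) hk₀abs (le_of_lt hq0)
      have h3 : (r / Real.sqrt N) ^ q = r ^ q / (Real.sqrt N) ^ q :=
        Real.div_rpow hr0 (le_of_lt hsN) q
      have h4 : c * r ^ q = (-α) * (r ^ q / (Real.sqrt N) ^ q) := by
        rw [hc]; ring
      rw [h4, ← h3]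
      have : (r / Real.sqrt N) ^ q ≤ ∑ k ∈ S, |x k| ^ q := le_trans h2 h1
      exact mul_le_mul_of_nonneg_left this (by linarith)
    -- combine
    have hsum : ∑ k ∈ S, (-((1/2) * |p k| * 4 ^ n * r ^ 2) + ((-α) * |x k| ^ q - D))
        ≤ Jfun n N p (Ffun f) v := by
      rw [Jfun]
      apply Finset.sum_le_sum
      intro k hk
      have := hquad k hk
      have := hpot k hk
      rw [← hx]
      linarith
    have hsplit : ∑ k ∈ S, (-((1/2) * |p k| * 4 ^ n * r ^ 2) + ((-α) * |x k| ^ q - D))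
        = -(P * r ^ 2) + (-α) * (∑ k ∈ S, |x k| ^ q) - K := by
      have e1 : ∑ k ∈ S, -((1/2) * |p k| * 4 ^ n * r ^ 2) = -(P * r ^ 2) := by
        rw [hP, Finset.sum_mul, ← Finset.sum_neg_distrib]
      have e2 : ∑ k ∈ S, ((-α) * |x k| ^ q - D) = (-α) * (∑ k ∈ S, |x k| ^ q) - K := by
        rw [Finset.sum_sub_distrib, Finset.mul_sum, Finset.sum_const, nsmul_eq_mul, hK]
      rw [Finset.sum_add_distrib, e1, e2]
      try ring
    rw [hsplit] at hsum
    linarith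
  -- conclude coercivity
  intro C
  refine ⟨max (max 1 (((P+1)/c) ^ (q-2)⁻¹)) (|C| + |K| + 1), fun v hv => ?_⟩
  set r := normE N v with hr
  have hr1 : 1 ≤ r := le_trans (le_trans (le_max_left _ _) (le_max_left _ _)) hv
  have hr0 : 0 < r := by linarith
  have hrC : |C| + |K| + 1 ≤ r := le_trans (le_max_right _ _) hv
  have hrP : ((P+1)/c) ^ (q-2)⁻¹ ≤ r :=
    le_trans (le_trans (le_max_right _ _) (le_max_left _ _)) hv
  have hq2 : q - 2 ≠ 0 := by linarith [hq]
  have h1 : (P+1)/c ≤ r ^ (q-2) := by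
    calc (P+1)/c = (((P+1)/c) ^ (q-2)⁻¹) ^ (q-2) :=
      (Real.rpow_inv_rpow (by positivity) hq2).symm
    _ ≤ r ^ (q-2) := Real.rpow_le_rpow (by positivity) hrP (by linarith)
  have h2 : P + 1 ≤ c * r ^ (q-2) := (div_le_iff₀' hc0).mp h1
  have hrq : r ^ q = r ^ (q-2) * r ^ 2 := by
    rw [← Real.rpow_natCast r 2, ← Real.rpow_add hr0]
    norm_num
  have := main v
  rw [← hr] at this
  rw [hrq] at this
  nlinarith [mul_le_mul_of_nonneg_right h2 (sq_nonneg r), abs_nonneg C, abs_nonneg K,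
    le_abs_self C, le_abs_self K, sq_nonneg r]
lemma abs_le_normE {N : ℕ} (v : Fin N → ℝ) (i : Fin N) : |v i| ≤ normE N v := by
  have hmem : ((i:ℤ) + 1) ∈ Finset.Icc (1:ℤ) (N:ℤ) := by
    rw [Finset.mem_Icc]; omega
  have h1 : v i ^ 2 ≤ ∑ k ∈ Finset.Icc (1:ℤ) (N:ℤ), (extendE N v k) ^ 2 := by
    have := Finset.single_le_sum (f := fun k => (extendE N v k)^2)
      (fun k _ => sq_nonneg _) hmem
    simpa [extendE_apply] using this
  calc |v i| = Real.sqrt (v i ^ 2) := (Real.sqrt_sq_eq_abs _).symm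
  _ ≤ normE N v := Real.sqrt_le_sqrt h1

lemma min_solves (n N : ℕ) (hn : 1 ≤ n) (hN : 2 ≤ N) (p : ℤ → ℝ)
    (f : ℤ → ℝ → ℝ) (hf : ∀ k, Continuous (f k)) (v : Fin N → ℝ)
    (hmin : ∀ w, Jfun n N p (Ffun f) v ≤ Jfun n N p (Ffun f) w) :
    Solves n N p f v := by
  intro k hk
  rw [Finset.mem_Icc] at hk
  obtain ⟨m, hm⟩ : ∃ m : Fin N, ((m:ℕ):ℤ) + 1 = k := by
    refine ⟨⟨(k-1).toNat, by omega⟩, ?_⟩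
    push_cast
    omega
  set x := extendE N v with hx
  set e := extendE N ((Pi.single m 1 : Fin N → ℝ)) with he
  have he_eq : ∀ j, e j = if j = k then 1 else 0 := by
    intro j; rw [he, extendE_single, hm]
  set φ := fun t : ℝ => Jfun n N p (Ffun f) (v + t • (Pi.single m 1 : Fin N → ℝ)) with hφ
  have hφ0 : φ 0 = Jfun n N p (Ffun f) v := by simp only [hφ, zero_smul, add_zero]
  have hlocmin : IsLocalMin φ 0 := by
    apply Filter.Eventually.of_forall
    intro t
    rw [hφ0]
    exact hmin _
  have hφeq : φ = fun t => ∑ k' ∈ Finset.Icc (1-(n:ℤ)) (N:ℤ),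
      ((1/2 : ℝ) * p k' * (dd^[n] x k' + t * dd^[n] e k')^2
        - Ffun f k' (x k' + t * e k')) := by
    funext t
    simp only [hφ, Jfun]
    apply Finset.sum_congr rfl
    intro k' _
    have hext : extendE N (v + t • (Pi.single m 1 : Fin N → ℝ)) = fun j => x j + t * e j := by
      funext j; rw [extendE_add_smul, hx, he]
    rw [hext, dd_iter_add_smul]
  have hderiv : HasDerivAt φ
      (∑ k' ∈ Finset.Icc (1-(n:ℤ)) (N:ℤ),
        (p k' * dd^[n] x k' * dd^[n] e k' - f k' (x k') * e k')) 0 := by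
    rw [hφeq]
    apply HasDerivAt.fun_sum
    intro k' _
    have g1 : HasDerivAt (fun t : ℝ => dd^[n] x k' + t * dd^[n] e k') (dd^[n] e k') 0 := by
      simpa using ((hasDerivAt_id (0:ℝ)).mul_const (dd^[n] e k')).const_add (dd^[n] x k')
    have g2 : HasDerivAt (fun t : ℝ => x k' + t * e k') (e k') 0 := by
      simpa using ((hasDerivAt_id (0:ℝ)).mul_const (e k')).const_add (x k')
    have d1 : HasDerivAt (fun t : ℝ => (1/2 : ℝ) * p k' * (dd^[n] x k' + t * dd^[n] e k')^2)
        (p k' * dd^[n] x k' * dd^[n] e k') 0 := by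
      have h2 := (g1.pow 2).const_mul ((1/2 : ℝ) * p k')
      convert h2 using 1
      all_goals try rfl
      simp
      ring
    have d2 : HasDerivAt (fun t : ℝ => Ffun f k' (x k' + t * e k'))
        (f k' (x k') * e k') 0 := by
      have h3 := (hasDerivAt_Ffun hf k' (x k' + 0 * e k')).comp 0 g2
      rw [zero_mul, add_zero] at h3; exact h3
    exact d1.sub d2
  have hcrit := hlocmin.hasDerivAt_eq_zero hderiv
  -- compute the two sums
  have hsum2 : ∑ k' ∈ Finset.Icc (1-(n:ℤ)) (N:ℤ), f k' (x k') * e k' = f k (x k) := by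
    rw [Finset.sum_eq_single k]
    · rw [he_eq, if_pos rfl, mul_one]
    · intro b _ hb
      rw [he_eq, if_neg hb, mul_zero]
    · intro habs
      exfalso
      apply habs
      rw [Finset.mem_Icc]
      omega
  have hsupp0 : ∀ j, j < k → e j = 0 := by
    intro j hj; rw [he_eq, if_neg (by omega)]
  have hsupp1 : ∀ j, k < j → e j = 0 := by
    intro j hj; rw [he_eq, if_neg (by omega)]
  have hsbp := sbp_s12 n k k le_rfl (fun j => p j * dd^[n] x j) e hsupp0 hsupp1
  have hsub : ∑ k' ∈ Finset.Icc (1-(n:ℤ)) (N:ℤ), p k' * dd^[n] x k' * dd^[n] e k'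
      = ∑ j ∈ Finset.Icc (k-(n:ℤ)) k, (p j * dd^[n] x j) * dd^[n] e j := by
    symm
    apply Finset.sum_subset
    · intro j hj
      rw [Finset.mem_Icc] at *
      omega
    · intro j hjS hjnot
      rw [Finset.mem_Icc] at hjnot
      have hBj : dd^[n] e j = 0 := by
        apply dd_iter_eq_zero
        intro i h1 h2
        rw [he_eq, if_neg]
        omega
      rw [hBj, mul_zero]
  have hsingle : ∑ j ∈ Finset.Icc k k, dd^[n] (fun j => p j * dd^[n] x j) (j - n) * e j
      = dd^[n] (fun j => p j * dd^[n] x j) (k - n) := by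
    rw [Finset.Icc_self, Finset.sum_singleton, he_eq, if_pos rfl, mul_one]
  rw [Finset.sum_sub_distrib, hsum2, hsub, hsbp, hsingle] at hcrit
  have hsq : ((-1:ℝ))^n * ((-1:ℝ))^n = 1 := by
    rw [← pow_add, ← two_mul, pow_mul]
    norm_num
  rw [pow_succ]
  linear_combination ((-1:ℝ)^n) * hcrit
    - (dd^[n] (fun j => p j * dd^[n] x j) (k - (n:ℤ))) * hsq

theorem stmt12 (n N : ℕ) (hn : 1 ≤ n) (hN : 2 ≤ N) (p : ℤ → ℝ)
    (f : ℤ → ℝ → ℝ) (hf : ∀ k, Continuous (f k))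
    (M α q : ℝ) (hM : 0 ≤ M) (hα : α < 0) (hq : 2 < q)
    (hFle : ∀ k ∈ Finset.Icc (1 : ℤ) (N : ℤ), ∀ u : ℝ, M < |u| →
      Ffun f k u ≤ α * |u| ^ q) :
    CoerciveE N (Jfun n N p (Ffun f)) ∧ ∃ v : Fin N → ℝ, Solves n N p f v := by
  have hco := coerciveJ n N hn hN p f hf M α q hM hα hq hFle
  refine ⟨hco, ?_⟩
  obtain ⟨R, hR⟩ := hco (Jfun n N p (Ffun f) 0)
  set R' := max R 0 with hR'
  have hR'0 : (0:ℝ) ≤ R' := le_max_right R 0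
  have hcomp : IsCompact (Metric.closedBall (0 : Fin N → ℝ) R') :=
    isCompact_closedBall _ _
  have h0mem : (0 : Fin N → ℝ) ∈ Metric.closedBall 0 R' :=
    Metric.mem_closedBall_self hR'0
  obtain ⟨v, hvmem, hvmin⟩ := hcomp.exists_isMinOn ⟨0, h0mem⟩
    (continuous_Jfun n N p hf).continuousOn
  refine ⟨v, min_solves n N hn hN p f hf v ?_⟩
  intro w
  by_cases hw : w ∈ Metric.closedBall (0 : Fin N → ℝ) R'
  · exact hvmin hw
  · have hnorm : R' < ‖w‖ := by
      rw [Metric.mem_closedBall, dist_zero_right] at hw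
      linarith [not_le.mp hw]
    have hex : ∃ i, R' < |w i| := by
      by_contra hcon
      push_neg at hcon
      have hle : ‖w‖ ≤ R' := by
        apply (pi_norm_le_iff_of_nonneg hR'0).mpr
        intro i
        simpa [Real.norm_eq_abs] using hcon i
      linarith
    obtain ⟨i, hi⟩ := hex
    have h1 : R ≤ normE N w :=
      le_trans (le_max_left R 0) (le_trans (le_of_lt hi) (abs_le_normE w i))
    exact le_trans (hvmin h0mem) (hR w h1)
end
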